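/- Fix α ∈ (0,1). For each integer N ≥ 2 set q = 1/N, define K₀(N) = ⌊ln α / ln(1 − q)⌋ (a nonnegative integer) and ρ₀(N) = 1 − α·(1 − q)^{−K₀(N)}, so that α = (1 − ρ₀(N))(1 − q)^{K₀(N)} with ρ₀(N) ∈ [0, q). Then the variance of the central limit theorem for adaptive multilevel splitting, σ_N² = α² ( K₀(N)·q/(1 − q) + ρ₀(N)/(1 − ρ₀(N)) ), converges to −α² ln α as N → ∞. -/

import Mathlib

open Real Filter

/-- Killing proportion `q = 1/N` of the last particle method. -/
noncomputable def amsQ (N : ℕ) : ℝ := 1 / N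

/-- `K₀(N) = ⌊ln α / ln(1 − 1/N)⌋`. -/
noncomputable def amsK0 (α : ℝ) (N : ℕ) : ℕ :=
  ⌊Real.log α / Real.log (1 - amsQ N)⌋₊

/-- `ρ₀(N) = 1 − α (1 − 1/N)^{−K₀(N)}`. -/
noncomputable def amsRho0 (α : ℝ) (N : ℕ) : ℝ :=
  1 - α * (1 - amsQ N) ^ (-(amsK0 α N : ℤ))

/-- The CLT variance
`σ_N² = α² ( K₀(N) q/(1−q) + ρ₀(N)/(1−ρ₀(N)) )` with `q = 1/N`. -/
noncomputable def amsVar (α : ℝ) (N : ℕ) : ℝ :=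
  α ^ 2 * ((amsK0 α N : ℝ) * amsQ N / (1 - amsQ N) +
    amsRho0 α N / (1 - amsRho0 α N))

lemma ams_basic (α : ℝ) (hα : α ∈ Set.Ioo (0:ℝ) 1) {N : ℕ} (hN : 2 ≤ N) :
    α = (1 - amsRho0 α N) * (1 - amsQ N) ^ amsK0 α N ∧
    amsRho0 α N ∈ Set.Ico (0 : ℝ) (amsQ N) := by
  obtain ⟨hα0, hα1⟩ := hα
  have hN2 : (2:ℝ) ≤ N := by exact_mod_cast hN
  have hNpos : (0:ℝ) < N := by linarith
  have hq0 : 0 < amsQ N := by simp only [amsQ]; positivity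
  have hq1 : amsQ N ≤ 1/2 := by
    simp only [amsQ]; rw [div_le_div_iff₀ hNpos (by norm_num)]; linarith
  set β := 1 - amsQ N with hβ
  have hβ0 : 0 < β := by rw [hβ]; linarith
  have hβ1 : β < 1 := by rw [hβ]; linarith
  have hlogβ : Real.log β < 0 := Real.log_neg hβ0 hβ1
  have hlogα : Real.log α < 0 := Real.log_neg hα0 hα1
  set a := Real.log α / Real.log β with ha
  have ha0 : 0 ≤ a := by rw [ha, div_nonneg_iff]; right; exact ⟨hlogα.le, hlogβ.le⟩
  set K := amsK0 α N with hK
  have hKfl : K = ⌊a⌋₊ := rfl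
  have hKa : (K:ℝ) ≤ a := hKfl ▸ Nat.floor_le ha0
  have haK : a < K + 1 := hKfl ▸ Nat.lt_floor_add_one a
  have hβK : (0:ℝ) < β ^ K := pow_pos hβ0 K
  have halogβ : a * Real.log β = Real.log α := div_mul_cancel₀ _ hlogβ.ne
  have h1 : α ≤ β ^ K := by
    have h : Real.log α ≤ Real.log (β ^ K) := by
      rw [Real.log_pow, ← halogβ]
      exact mul_le_mul_of_nonpos_right hKa hlogβ.le
    calc α = Real.exp (Real.log α) := (Real.exp_log hα0).symm
      _ ≤ Real.exp (Real.log (β ^ K)) := Real.exp_le_exp.mpr h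
      _ = β ^ K := Real.exp_log hβK
  have h2 : β ^ (K + 1) < α := by
    have h : Real.log (β ^ (K+1)) < Real.log α := by
      rw [Real.log_pow, ← halogβ]
      push_cast
      exact mul_lt_mul_of_neg_right haK hlogβ
    calc β ^ (K+1) = Real.exp (Real.log (β ^ (K+1))) := (Real.exp_log (pow_pos hβ0 _)).symm
      _ < Real.exp (Real.log α) := Real.exp_lt_exp.mpr h
      _ = α := Real.exp_log hα0
  have hρ : amsRho0 α N = 1 - α / β ^ K := by
    simp only [amsRho0, ← hβ, ← hK, zpow_neg, zpow_natCast, div_eq_mul_inv]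
  refine ⟨?_, ?_, ?_⟩
  · rw [hρ]; field_simp; ring
  · rw [hρ, sub_nonneg, div_le_one hβK]; exact h1
  · rw [hρ]
    have : β < α / β ^ K := by
      rw [lt_div_iff₀ hβK]
      calc β * β ^ K = β ^ (K+1) := by ring
        _ < α := h2
    have hβq : amsQ N = 1 - β := by rw [hβ]; ring
    rw [hβq]; linarith

/-- For `α ∈ (0,1)` and `q = 1/N`: the pair `(ρ₀(N), K₀(N))` satisfies
`α = (1 − ρ₀(N))(1 − q)^{K₀(N)}` with `ρ₀(N) ∈ [0, q)`, and the CLT variance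
`σ_N²` converges to `−α² ln α` as `N → ∞`. -/
theorem ams_variance_last_particle_limit (α : ℝ) (hα : α ∈ Set.Ioo (0 : ℝ) 1) :
    (∀ N : ℕ, 2 ≤ N →
      α = (1 - amsRho0 α N) * (1 - amsQ N) ^ amsK0 α N ∧
      amsRho0 α N ∈ Set.Ico (0 : ℝ) (amsQ N)) ∧
    Tendsto (fun N : ℕ => amsVar α N) atTop (nhds (-(α ^ 2) * Real.log α)) := by
  obtain ⟨hα0, hα1⟩ := hα
  refine ⟨fun N hN => ams_basic α ⟨hα0, hα1⟩ hN, ?_⟩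
  -- N * log(1 - 1/N) → -1
  have hbase : Tendsto (fun N : ℕ => (N:ℝ) * Real.log (1 - 1/(N:ℝ))) atTop (nhds (-1)) := by
    have h := (Real.tendsto_mul_log_one_add_div_atTop (-1)).comp
      tendsto_natCast_atTop_atTop (α := ℕ)
    convert h using 2 with N
    simp [Function.comp, neg_div, sub_eq_add_neg]
  have hq0 : Tendsto (fun N : ℕ => (1:ℝ)/(N:ℝ)) atTop (nhds 0) :=
    tendsto_one_div_atTop_nhds_zero_nat
  -- a N / N → - log α
  have haN : Tendsto (fun N : ℕ => Real.log α / Real.log (1 - 1/(N:ℝ)) / (N:ℝ)) atTop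
      (nhds (- Real.log α)) := by
    have h : Tendsto (fun N : ℕ => Real.log α / ((N:ℝ) * Real.log (1 - 1/(N:ℝ)))) atTop
        (nhds (Real.log α / (-1))) := tendsto_const_nhds.div hbase (by norm_num)
    simp only [div_neg_eq_neg_div, div_one] at h
    refine h.congr (fun N => ?_)
    rw [div_div]; ring_nf
  -- K/N → - log α by squeeze
  have hKN : Tendsto (fun N : ℕ => (amsK0 α N : ℝ) / (N:ℝ)) atTop (nhds (- Real.log α)) := by
    have hlow : Tendsto (fun N : ℕ =>
        Real.log α / Real.log (1 - 1/(N:ℝ)) / (N:ℝ) - 1/(N:ℝ)) atTop (nhds (- Real.log α)) := by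
      simpa using haN.sub hq0
    refine tendsto_of_tendsto_of_tendsto_of_le_of_le' hlow haN ?_ ?_
    · filter_upwards [eventually_ge_atTop 2] with N hN
      have hNpos : (0:ℝ) < N := by positivity
      have ha := Nat.lt_floor_add_one (Real.log α / Real.log (1 - 1/(N:ℝ)))
      have hK : Real.log α / Real.log (1 - 1/(N:ℝ)) - 1 ≤ (amsK0 α N : ℝ) := by
        have : amsK0 α N = ⌊Real.log α / Real.log (1 - 1/(N:ℝ))⌋₊ := by
          simp [amsK0, amsQ]
        rw [this]; linarith [Nat.lt_floor_add_one (Real.log α / Real.log (1 - 1/(N:ℝ)))]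
      calc Real.log α / Real.log (1 - 1/(N:ℝ)) / (N:ℝ) - 1/(N:ℝ)
          = (Real.log α / Real.log (1 - 1/(N:ℝ)) - 1) / (N:ℝ) := by ring
        _ ≤ (amsK0 α N : ℝ) / (N:ℝ) := div_le_div_of_nonneg_right hK hNpos.le
    · filter_upwards [eventually_ge_atTop 2] with N hN
      have hNpos : (0:ℝ) < N := by positivity
      have hN2 : (2:ℝ) ≤ N := by exact_mod_cast hN
      have hq1 : (1:ℝ)/(N:ℝ) ≤ 1/2 := by
        rw [div_le_div_iff₀ hNpos (by norm_num)]; linarith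
      have hβ0 : (0:ℝ) < 1 - 1/(N:ℝ) := by linarith
      have hβ1 : (1:ℝ) - 1/(N:ℝ) < 1 := by
        have : (0:ℝ) < 1/(N:ℝ) := by positivity
        linarith
      have ha0 : 0 ≤ Real.log α / Real.log (1 - 1/(N:ℝ)) := by
        rw [div_nonneg_iff]; right
        exact ⟨(Real.log_neg hα0 hα1).le, (Real.log_neg hβ0 hβ1).le⟩
      have hK : (amsK0 α N : ℝ) ≤ Real.log α / Real.log (1 - 1/(N:ℝ)) := by
        have h : amsK0 α N = ⌊Real.log α / Real.log (1 - 1/(N:ℝ))⌋₊ := by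
          simp [amsK0, amsQ]
        rw [h]; exact Nat.floor_le ha0
      exact div_le_div_of_nonneg_right hK hNpos.le
  -- ρ₀ → 0
  have hρ : Tendsto (fun N : ℕ => amsRho0 α N) atTop (nhds 0) := by
    refine tendsto_of_tendsto_of_tendsto_of_le_of_le' tendsto_const_nhds hq0 ?_ ?_
    · filter_upwards [eventually_ge_atTop 2] with N hN
      exact (ams_basic α ⟨hα0, hα1⟩ hN).2.1
    · filter_upwards [eventually_ge_atTop 2] with N hN
      exact ((ams_basic α ⟨hα0, hα1⟩ hN).2.2).le
  -- term 2 → 0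
  have h2 : Tendsto (fun N : ℕ => amsRho0 α N / (1 - amsRho0 α N)) atTop (nhds 0) := by
    have := hρ.div ((tendsto_const_nhds (x := (1:ℝ))).sub hρ) (by norm_num)
    simp only [sub_zero, div_one] at this; exact this
  -- term 1 → - log α
  have h1 : Tendsto (fun N : ℕ => (amsK0 α N : ℝ) * amsQ N / (1 - amsQ N)) atTop
      (nhds (- Real.log α)) := by
    have hden : Tendsto (fun N : ℕ => 1 - amsQ N) atTop (nhds 1) := by
      have := (tendsto_const_nhds (x := (1:ℝ))).sub hq0
      simpa [amsQ] using this
    have := hKN.div hden (by norm_num)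
    simp only [div_one] at this
    refine this.congr (fun N => ?_)
    simp only [Pi.div_apply, amsQ]
    rw [mul_one_div]
  have := (h1.add h2).const_mul (α ^ 2)
  simp only [add_zero] at this
  convert this using 2
  · rfl
  ring
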